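/- Let Q ⊆ P be finite nonempty sets in ℝ² and let x ∈ P. Then there exists a unit vector u ∈ ℝ² such that dist(x, conv(Q)) ≤ w(u,P) − w(u,Q), where conv(Q) is the convex hull of Q and dist denotes Euclidean distance from a point to a set. -/

import Mathlib

open Real RealInnerProductSpace

/-- The directional width of a finite nonempty point set `P` in direction `u`:
`max_{p ∈ P} ⟪u, p⟫ - min_{p ∈ P} ⟪u, p⟫`. -/
noncomputable def dirWidth (P : Finset (EuclideanSpace ℝ (Fin 2))) (hP : P.Nonempty)
    (u : EuclideanSpace ℝ (Fin 2)) : ℝ :=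
  P.sup' hP (fun p => ⟪u, p⟫) - P.inf' hP (fun p => ⟪u, p⟫)

theorem separating_direction
    (P Q : Finset (EuclideanSpace ℝ (Fin 2))) (hP : P.Nonempty) (hQ : Q.Nonempty)
    (hQP : Q ⊆ P) (x : EuclideanSpace ℝ (Fin 2)) (hx : x ∈ P) :
    ∃ u : EuclideanSpace ℝ (Fin 2), ‖u‖ = 1 ∧
      Metric.infDist x (convexHull ℝ (Q : Set (EuclideanSpace ℝ (Fin 2)))) ≤
        dirWidth P hP u - dirWidth Q hQ u := by
  set K : Set (EuclideanSpace ℝ (Fin 2)) := convexHull ℝ (Q : Set _) with hK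
  have hKcompact : IsCompact K := (Q.finite_toSet).isCompact_convexHull ℝ
  have hKne : K.Nonempty := hQ.to_set.mono (subset_convexHull ℝ _)
  obtain ⟨y, hyK, hdist⟩ := hKcompact.exists_infDist_eq_dist hKne x
  have hinf_mono : P.inf' hP (fun p => ⟪(‖x - y‖⁻¹ • (x - y)), p⟫) ≤
      Q.inf' hQ (fun p => ⟪(‖x - y‖⁻¹ • (x - y)), p⟫) :=
    Finset.inf'_mono _ hQP hQ
  by_cases hxy : x = y
  · refine ⟨EuclideanSpace.single 0 1, by simp, ?_⟩
    have h0 : Metric.infDist x K = 0 := by rw [hdist, hxy, dist_self]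
    rw [h0]
    have h1 : Q.sup' hQ (fun p => ⟪(EuclideanSpace.single 0 1 : EuclideanSpace ℝ (Fin 2)), p⟫) ≤
        P.sup' hP (fun p => ⟪(EuclideanSpace.single 0 1 : EuclideanSpace ℝ (Fin 2)), p⟫) :=
      Finset.sup'_mono _ hQP hQ
    have h2 : P.inf' hP (fun p => ⟪(EuclideanSpace.single 0 1 : EuclideanSpace ℝ (Fin 2)), p⟫) ≤
        Q.inf' hQ (fun p => ⟪(EuclideanSpace.single 0 1 : EuclideanSpace ℝ (Fin 2)), p⟫) :=
      Finset.inf'_mono _ hQP hQ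
    simp only [dirWidth]
    linarith
  · have hne : x - y ≠ 0 := sub_ne_zero.mpr hxy
    set u : EuclideanSpace ℝ (Fin 2) := ‖x - y‖⁻¹ • (x - y) with hu
    have hnu : ‖u‖ = 1 := norm_smul_inv_norm hne
    refine ⟨u, hnu, ?_⟩
    -- supporting hyperplane property
    have hproj : ∀ w ∈ K, ⟪x - y, w - y⟫ ≤ 0 := by
      have hconv : Convex ℝ K := convex_convexHull ℝ _
      have heq : ‖x - y‖ = ⨅ w : K, ‖x - w‖ := by
        simp only [← dist_eq_norm]
        rw [← hdist, Metric.infDist_eq_iInf]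
      exact (norm_eq_iInf_iff_real_inner_le_zero hconv hyK).mp heq
    have hnorm_pos : (0:ℝ) < ‖x - y‖ := norm_pos_iff.mpr hne
    have hux : ⟪u, x⟫ - ⟪u, y⟫ = ‖x - y‖ := by
      rw [hu, real_inner_smul_left, real_inner_smul_left]
      rw [← mul_sub, ← inner_sub_right, real_inner_self_eq_norm_sq]
      field_simp
    have hsupP : ⟪u, x⟫ ≤ P.sup' hP (fun p => ⟪u, p⟫) := Finset.le_sup' _ hx
    have hsupQ : Q.sup' hQ (fun p => ⟪u, p⟫) ≤ ⟪u, y⟫ := by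
      apply Finset.sup'_le
      intro q hq
      have hqK : q ∈ K := subset_convexHull ℝ _ hq
      have := hproj q hqK
      have h1 : ⟪u, q - y⟫ ≤ 0 := by
        rw [hu, real_inner_smul_left]
        exact mul_nonpos_of_nonneg_of_nonpos (inv_nonneg.mpr hnorm_pos.le) this
      rw [inner_sub_right] at h1
      linarith
    have hinfQ : P.inf' hP (fun p => ⟪u, p⟫) ≤ Q.inf' hQ (fun p => ⟪u, p⟫) :=
      Finset.inf'_mono _ hQP hQ
    rw [hdist, dist_eq_norm]
    simp only [dirWidth]
    linarith
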